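/- There exist constants c ≥ 1 and C > 0 with the following property. For all n, μ, k ∈ ℕ with k ≥ 1, μ ≥ max(3, c·k), and n ≥ μ, and for every S ⊆ Fin n with |S| ≤ k: under the product probability distribution in which each left vertex j ∈ Fin n independently receives a neighbourhood N(j) drawn uniformly at random from the 3-element subsets of Fin μ, the probability of the event 'for every nonempty S' ⊆ S, the number of right vertices in N(S') that are S'-leaves is at least |N(S')|/2' is at least 1 − C/k. -/

import Mathlib

open Finset
open scoped Classical


/-- The sample space of the random left-regular bipartite graph: each left vertex
`j ∈ Fin n` independently receives a neighbourhood drawn uniformly at random from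
the 3-element subsets of `Fin μ`.  Since each coordinate is uniform and the
coordinates are independent, the product distribution is the uniform distribution
on this finite product space, so probabilities are ratios of cardinalities. -/
abbrev GraphSample (n μ : ℕ) := Fin n → {t : Finset (Fin μ) // t.card = 3}

/-- `N(S')`: the set of right neighbours of a set `S'` of left vertices. -/
def rightNbrs {n μ : ℕ} (ω : GraphSample n μ) (S' : Finset (Fin n)) :
    Finset (Fin μ) :=
  S'.biUnion fun j => (ω j : Finset (Fin μ))

/-- The set of right vertices in `N(S')` that are `S'`-leaves, i.e. have exactly
one neighbour in `S'`. -/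
def leaves {n μ : ℕ} (ω : GraphSample n μ) (S' : Finset (Fin n)) :
    Finset (Fin μ) :=
  (rightNbrs ω S').filter fun i =>
    (S'.filter fun j => i ∈ (ω j : Finset (Fin μ))).card = 1

/-- "Many leaf nodes": there are constants `c ≥ 1` and `C > 0` such that whenever
`k ≥ 1`, `μ ≥ max(3, c·k)`, `n ≥ μ`, and `|S| ≤ k`, with probability at least
`1 − C/k` (under the uniform product distribution on neighbourhood assignments)
every nonempty `S' ⊆ S` has at least `|N(S')|/2` `S'`-leaf nodes in `N(S')`. -/

lemma sum_deg {n μ : ℕ} (ω : GraphSample n μ) (S' : Finset (Fin n)) :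
    ∑ i ∈ rightNbrs ω S', (S'.filter fun j => i ∈ (ω j : Finset (Fin μ))).card
      = 3 * S'.card := by
  have : ∀ i, (S'.filter fun j => i ∈ (ω j : Finset (Fin μ))).card
      = ∑ j ∈ S', if i ∈ (ω j : Finset (Fin μ)) then 1 else 0 := by
    intro i; rw [Finset.card_filter]
  simp_rw [this]
  rw [Finset.sum_comm]
  have : ∀ j ∈ S', (∑ i ∈ rightNbrs ω S', if i ∈ (ω j : Finset (Fin μ)) then 1 else 0) = 3 := by
    intro j hj
    rw [← Finset.card_filter]
    have hsub : (ω j : Finset (Fin μ)) ⊆ rightNbrs ω S' := by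
      intro i hi; exact Finset.mem_biUnion.2 ⟨j, hj, hi⟩
    have : (rightNbrs ω S').filter (fun i => i ∈ (ω j : Finset (Fin μ))) = (ω j : Finset (Fin μ)) := by
      ext i; simp only [Finset.mem_filter]
      exact ⟨fun h => h.2, fun h => ⟨hsub h, h⟩⟩
    rw [this, (ω j).2]
  rw [Finset.sum_congr rfl this, Finset.sum_const, smul_eq_mul, mul_comm]

lemma leaves_half {n μ : ℕ} (ω : GraphSample n μ) (S' : Finset (Fin n))
    (h : 2 * S'.card ≤ (rightNbrs ω S').card) :
    ((rightNbrs ω S').card : ℝ) / 2 ≤ ((leaves ω S').card : ℝ) := by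
  have key : 2 * (rightNbrs ω S').card ≤ 3 * S'.card + (leaves ω S').card := by
    have hL : (leaves ω S').card = ∑ i ∈ rightNbrs ω S',
        if (S'.filter fun j => i ∈ (ω j : Finset (Fin μ))).card = 1 then 1 else 0 := by
      rw [leaves, Finset.card_filter]
    have hsum := sum_deg ω S'
    have hpt : ∀ i ∈ rightNbrs ω S',
        2 ≤ (S'.filter fun j => i ∈ (ω j : Finset (Fin μ))).card
          + (if (S'.filter fun j => i ∈ (ω j : Finset (Fin μ))).card = 1 then 1 else 0) := by
      intro i hi
      have : 1 ≤ (S'.filter fun j => i ∈ (ω j : Finset (Fin μ))).card := by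
        obtain ⟨j, hj, hij⟩ := Finset.mem_biUnion.1 hi
        exact Finset.card_pos.2 ⟨j, Finset.mem_filter.2 ⟨hj, hij⟩⟩
      split_ifs with hone <;> omega
    calc 2 * (rightNbrs ω S').card = ∑ i ∈ rightNbrs ω S', 2 := by
          rw [Finset.sum_const, smul_eq_mul, mul_comm]
      _ ≤ ∑ i ∈ rightNbrs ω S', ((S'.filter fun j => i ∈ (ω j : Finset (Fin μ))).card
          + (if (S'.filter fun j => i ∈ (ω j : Finset (Fin μ))).card = 1 then 1 else 0)) :=
          Finset.sum_le_sum hpt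
      _ = 3 * S'.card + (leaves ω S').card := by rw [Finset.sum_add_distrib, hsum, hL]
  have : (rightNbrs ω S').card ≤ 2 * (leaves ω S').card := by omega
  have := (Nat.cast_le (α := ℝ)).2 this
  push_cast at this
  linarith

lemma card_triples (μ : ℕ) :
    Fintype.card {t : Finset (Fin μ) // t.card = 3} = μ.choose 3 := by
  simpa using Fintype.card_finset_len (α := Fin μ) 3

lemma total_card (n μ : ℕ) : Nat.card (GraphSample n μ) = (μ.choose 3) ^ n := by
  rw [Nat.card_eq_fintype_card, Fintype.card_fun, card_triples, Fintype.card_fin]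

lemma card_triples_subset {μ : ℕ} (T : Finset (Fin μ)) :
    (univ.filter (fun t : {t : Finset (Fin μ) // t.card = 3} =>
      (t : Finset (Fin μ)) ⊆ T)).card = T.card.choose 3 := by
  rw [← Finset.card_powersetCard 3 T]
  refine Finset.card_bij (fun t _ => (t : Finset (Fin μ))) ?_ ?_ ?_
  · intro t ht
    rw [Finset.mem_powersetCard]
    exact ⟨(Finset.mem_filter.1 ht).2, t.2⟩
  · intro a ha b hb hab; exact Subtype.ext hab
  · intro u hu
    rw [Finset.mem_powersetCard] at hu
    exact ⟨⟨u, hu.2⟩, Finset.mem_filter.2 ⟨Finset.mem_univ _, hu.1⟩, rfl⟩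

lemma card_pi_subset {n μ : ℕ} (S' : Finset (Fin n)) (T : Finset (Fin μ)) :
    (univ.filter (fun ω : GraphSample n μ => ∀ j ∈ S', (ω j : Finset (Fin μ)) ⊆ T)).card
      = (T.card.choose 3) ^ S'.card * (μ.choose 3) ^ (n - S'.card) := by
  have hset : (univ.filter (fun ω : GraphSample n μ => ∀ j ∈ S', (ω j : Finset (Fin μ)) ⊆ T))
      = Fintype.piFinset (fun j => if j ∈ S' then
          (univ.filter (fun t : {t : Finset (Fin μ) // t.card = 3} => (t : Finset (Fin μ)) ⊆ T))
          else univ) := by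
    ext ω
    simp only [Finset.mem_filter, Finset.mem_univ, true_and, Fintype.mem_piFinset]
    constructor
    · intro h j
      by_cases hj : j ∈ S'
      · simp [hj, h j hj]
      · simp [hj]
    · intro h j hj
      have := h j
      simp [hj] at this
      exact this
  rw [hset, Fintype.card_piFinset]
  rw [← Finset.prod_mul_prod_compl S']
  have h1 : ∀ j ∈ S', (if j ∈ S' then
      (univ.filter (fun t : {t : Finset (Fin μ) // t.card = 3} => (t : Finset (Fin μ)) ⊆ T))
      else univ).card = T.card.choose 3 := by
    intro j hj; simp [hj, card_triples_subset]
  have h2 : ∀ j ∈ S'ᶜ, (if j ∈ S' then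
      (univ.filter (fun t : {t : Finset (Fin μ) // t.card = 3} => (t : Finset (Fin μ)) ⊆ T))
      else univ).card = μ.choose 3 := by
    intro j hj
    rw [Finset.mem_compl] at hj
    rw [if_neg hj, Finset.card_univ, card_triples]
  rw [Finset.prod_congr rfl h1, Finset.prod_congr rfl h2, Finset.prod_const, Finset.prod_const,
    Finset.card_compl, Fintype.card_fin]

lemma card_bad_le {n μ : ℕ} (S' : Finset (Fin n)) (hs : 1 ≤ S'.card)
    (hμ : 2 * S'.card - 1 ≤ μ) :
    (univ.filter fun ω : GraphSample n μ => (rightNbrs ω S').card < 2 * S'.card).card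
      ≤ μ.choose (2 * S'.card - 1) * ((2 * S'.card - 1).choose 3) ^ S'.card
          * (μ.choose 3) ^ (n - S'.card) := by
  set m := 2 * S'.card - 1 with hm
  have hsub : (univ.filter fun ω : GraphSample n μ => (rightNbrs ω S').card < 2 * S'.card)
      ⊆ (Finset.powersetCard m (univ : Finset (Fin μ))).biUnion
          (fun T => univ.filter fun ω : GraphSample n μ => ∀ j ∈ S', (ω j : Finset (Fin μ)) ⊆ T) := by
    intro ω hω
    rw [Finset.mem_filter] at hω
    have hcard : (rightNbrs ω S').card ≤ m := by omega
    obtain ⟨T, hT1, _, hT3⟩ := Finset.exists_subsuperset_card_eq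
      (Finset.subset_univ (rightNbrs ω S')) hcard (by simpa using hμ)
    refine Finset.mem_biUnion.2 ⟨T, ?_, ?_⟩
    · rw [Finset.mem_powersetCard]; exact ⟨Finset.subset_univ T, hT3⟩
    · refine Finset.mem_filter.2 ⟨Finset.mem_univ _, fun j hj => ?_⟩
      exact fun i hi => hT1 (Finset.mem_biUnion.2 ⟨j, hj, hi⟩)
  calc (univ.filter fun ω : GraphSample n μ => (rightNbrs ω S').card < 2 * S'.card).card
      ≤ ((Finset.powersetCard m (univ : Finset (Fin μ))).biUnion
          (fun T => univ.filter fun ω : GraphSample n μ =>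
            ∀ j ∈ S', (ω j : Finset (Fin μ)) ⊆ T)).card := Finset.card_le_card hsub
    _ ≤ ∑ T ∈ Finset.powersetCard m (univ : Finset (Fin μ)),
          (univ.filter fun ω : GraphSample n μ =>
            ∀ j ∈ S', (ω j : Finset (Fin μ)) ⊆ T).card := Finset.card_biUnion_le
    _ = ∑ T ∈ Finset.powersetCard m (univ : Finset (Fin μ)),
          (m.choose 3) ^ S'.card * (μ.choose 3) ^ (n - S'.card) := by
        refine Finset.sum_congr rfl fun T hT => ?_
        rw [card_pi_subset]
        rw [Finset.mem_powersetCard] at hT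
        rw [hT.2]
    _ = μ.choose m * ((m.choose 3) ^ S'.card * (μ.choose 3) ^ (n - S'.card)) := by
        rw [Finset.sum_const, smul_eq_mul, Finset.card_powersetCard, Finset.card_univ,
          Fintype.card_fin]
    _ = μ.choose m * (m.choose 3) ^ S'.card * (μ.choose 3) ^ (n - S'.card) := by ring

lemma pow_le_exp_mul_factorial (m : ℕ) : (m:ℝ)^m ≤ Real.exp m * m.factorial := by
  have h := Real.sum_le_exp_of_nonneg (x := (m:ℝ)) (by positivity) (m+1)
  have h2 : (m:ℝ)^m / m.factorial ≤ Real.exp m :=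
    le_trans (Finset.single_le_sum (f := fun i => (m:ℝ)^i / (i.factorial:ℝ))
      (fun i _ => by positivity) (Finset.self_mem_range_succ m)) h
  have hf : (0:ℝ) < m.factorial := by positivity
  calc (m:ℝ)^m = ((m:ℝ)^m / m.factorial) * m.factorial := by field_simp
    _ ≤ Real.exp m * m.factorial := by
        apply mul_le_mul_of_nonneg_right h2 hf.le

lemma exp_nat_eq_pow (m : ℕ) : Real.exp m = (Real.exp 1)^m := by
  rw [← Real.exp_nat_mul]; norm_num

lemma s_pow_3s (s : ℕ) (hs : 1 ≤ s) :
    ((s:ℝ))^(3*s) ≤ (s:ℝ) * (Real.exp 1)^(3*s)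
      * ((s.factorial : ℝ) * ((2*s-1).factorial : ℝ)) := by
  have hE : (1:ℝ) ≤ Real.exp 1 := by
    have := Real.exp_one_gt_d9; linarith
  have h1 : (s:ℝ)^s ≤ (Real.exp 1)^s * s.factorial := by
    have := pow_le_exp_mul_factorial s; rwa [exp_nat_eq_pow] at this
  have h2 : (s:ℝ)^(2*s-1) ≤ (Real.exp 1)^(2*s-1) * (2*s-1).factorial := by
    have hle : (s:ℝ)^(2*s-1) ≤ ((2*s-1:ℕ):ℝ)^(2*s-1) := by
      apply pow_le_pow_left₀ (by positivity)
      have : s ≤ 2*s-1 := by omega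
      exact_mod_cast this
    refine hle.trans ?_
    have := pow_le_exp_mul_factorial (2*s-1); rwa [exp_nat_eq_pow] at this
  have hsplit : (s:ℝ)^(3*s) = (s:ℝ)^s * (s:ℝ)^(2*s-1) * (s:ℝ) := by
    have : (s:ℝ)^s * (s:ℝ)^(2*s-1) * (s:ℝ) = (s:ℝ)^(s + (2*s-1) + 1) := by
      rw [pow_add, pow_add, pow_one]
    rw [this]
    congr 1
    omega
  rw [hsplit]
  have hEpow : (Real.exp 1)^s * (Real.exp 1)^(2*s-1) ≤ (Real.exp 1)^(3*s) := by
    rw [← pow_add]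
    apply pow_le_pow_right₀ hE
    omega
  have hs0 : (0:ℝ) ≤ (s:ℝ) := by positivity
  calc (s:ℝ)^s * (s:ℝ)^(2*s-1) * (s:ℝ)
      ≤ ((Real.exp 1)^s * s.factorial) * ((Real.exp 1)^(2*s-1) * (2*s-1).factorial) * (s:ℝ) := by
        apply mul_le_mul_of_nonneg_right _ hs0
        apply mul_le_mul h1 h2 (by positivity) (by positivity)
    _ = ((Real.exp 1)^s * (Real.exp 1)^(2*s-1)) * ((s.factorial : ℝ) * (2*s-1).factorial) * (s:ℝ) := by
        ring
    _ ≤ (Real.exp 1)^(3*s) * ((s.factorial : ℝ) * (2*s-1).factorial) * (s:ℝ) := by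
        apply mul_le_mul_of_nonneg_right _ hs0
        apply mul_le_mul_of_nonneg_right hEpow (by positivity)
    _ = (s:ℝ) * (Real.exp 1)^(3*s) * ((s.factorial : ℝ) * (2*s-1).factorial) := by ring

lemma choose_mul_fact_le (a b : ℕ) : ((a.choose b : ℝ)) * b.factorial ≤ (a:ℝ)^b := by
  have h : b.factorial * a.choose b ≤ a^b :=
    Nat.descFactorial_eq_factorial_mul_choose a b ▸ Nat.descFactorial_le_pow a b
  calc ((a.choose b : ℝ)) * b.factorial = ((b.factorial * a.choose b : ℕ) : ℝ) := by
        push_cast; ring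
    _ ≤ ((a^b : ℕ) : ℝ) := by exact_mod_cast h
    _ = (a:ℝ)^b := by push_cast; ring

lemma term_bound (k μ s : ℕ) (hs : 2 ≤ s) (hsk : s ≤ k) (hμ3 : 3 ≤ μ)
    (hμk : 6000 * k ≤ μ) :
    ((k.choose s : ℝ)) * (μ.choose (2*s-1) : ℝ) * (((2*s-1).choose 3 : ℝ))^s
      ≤ (1/2)^s * ((μ.choose 3 : ℝ))^s / (μ:ℝ) := by
  set E : ℝ := Real.exp 1 with hEdef
  have hE1 : (1:ℝ) ≤ E := by have := Real.exp_one_gt_d9; simp only [hEdef]; linarith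
  have hE3 : E^3 ≤ 20.83 := by
    have h9 : E ≤ 2.72 := by have := Real.exp_one_lt_d9; simp only [hEdef]; linarith
    calc E^3 ≤ 2.72^3 := pow_le_pow_left₀ (Real.exp_pos 1).le h9 3
      _ ≤ 20.83 := by norm_num
  set F : ℝ := (s.factorial : ℝ) * ((2*s-1).factorial : ℝ) with hFdef
  have hF : (0:ℝ) < F := by positivity
  set M : ℝ := (μ.choose 3 : ℝ) with hMdef
  have hμpos : (0:ℝ) < μ := by positivity
  -- basic bounds
  have h1 : ((k.choose s : ℝ)) * s.factorial ≤ (k:ℝ)^s := choose_mul_fact_le k s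
  have h2 : ((μ.choose (2*s-1) : ℝ)) * (2*s-1).factorial ≤ (μ:ℝ)^(2*s-1) :=
    choose_mul_fact_le μ (2*s-1)
  have h3 : (((2*s-1).choose 3 : ℝ)) ≤ 2 * (s:ℝ)^3 := by
    have hn : (2*s-1).choose 3 * 6 ≤ 8 * s^3 := by
      have hd : (2*s-1).descFactorial 3 ≤ (2*s-1)^3 := Nat.descFactorial_le_pow _ _
      rw [Nat.descFactorial_eq_factorial_mul_choose] at hd
      have hcube : (2*s-1)^3 ≤ 8 * s^3 := by
        have : 2*s-1 ≤ 2*s := by omega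
        calc (2*s-1)^3 ≤ (2*s)^3 := Nat.pow_le_pow_left this 3
          _ = 8 * s^3 := by ring
      simp only [show Nat.factorial 3 = 6 from rfl] at hd
      omega
    have hn' : (2*s-1).choose 3 ≤ 2 * s^3 := by omega
    exact_mod_cast hn'
  have h4 : (μ:ℝ)^3 ≤ 36 * M := by
    have hd : μ.descFactorial 3 = μ * (μ-1) * (μ-2) := by
      show μ.descFactorial 3 = _
      rw [Nat.descFactorial_succ, Nat.descFactorial_succ, Nat.descFactorial_succ,
        Nat.descFactorial_zero]
      simp only [Nat.sub_zero, mul_one]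
      ring
    have h6 : (6 : ℕ) * μ.choose 3 = μ * (μ-1) * (μ-2) := by
      rw [← hd, Nat.descFactorial_eq_factorial_mul_choose]
      norm_num [Nat.factorial]
    have hc : (6:ℝ) * M = (μ:ℝ) * ((μ:ℝ)-1) * ((μ:ℝ)-2) := by
      rw [hMdef]
      have := congrArg (fun x : ℕ => (x:ℝ)) h6
      push_cast [Nat.cast_sub (by omega : 1 ≤ μ), Nat.cast_sub (by omega : 2 ≤ μ)] at this
      linarith [this]
    have hμ3' : (3:ℝ) ≤ (μ:ℝ) := by exact_mod_cast hμ3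
    nlinarith [hc, hμ3']
  have h5 := s_pow_3s s (by omega)
  have h6 : (s:ℝ) ≤ 2^s := by
    exact_mod_cast (Nat.lt_two_pow_self (n := s)).le
  have h7 : 288 * E^3 * (k:ℝ) ≤ (μ:ℝ) := by
    have hkμ : (6000:ℝ) * k ≤ μ := by exact_mod_cast hμk
    have hk1 : (1:ℝ) ≤ k := by exact_mod_cast (by omega : 1 ≤ k)
    nlinarith [hE3, hk1]
  -- main chain
  set Ck : ℝ := (k.choose s : ℝ) with hCk
  set Cμ : ℝ := (μ.choose (2*s-1) : ℝ) with hCμ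
  set D : ℝ := ((2*s-1).choose 3 : ℝ) with hD
  have hCk0 : 0 ≤ Ck := by positivity
  have hCμ0 : 0 ≤ Cμ := by positivity
  have hD0 : 0 ≤ D := by positivity
  have e1 : (μ:ℝ)^(2*s-1) * μ = (μ:ℝ)^(2*s) := by
    rw [← pow_succ]; congr 1; omega
  have e2 : ((s:ℝ)^3)^s = (s:ℝ)^(3*s) := by
    rw [← pow_mul]
  have e3 : (288 * E^3 * (k:ℝ))^s = 2^s*2^s*36^s*2^s*(E^3)^s*(k:ℝ)^s := by
    rw [show (288:ℝ) * E^3 * k = 2*(2*(36*(2*((E^3)*k)))) by ring,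
      mul_pow, mul_pow, mul_pow, mul_pow, mul_pow]
    ring
  have key2 : (Ck * Cμ * D^s * (2^s * (μ:ℝ))) * (36^s * F) ≤ M^s * (36^s * F) := by
    calc (Ck * Cμ * D^s * (2^s * (μ:ℝ))) * (36^s * F)
        = (Ck * (s.factorial:ℝ)) * (Cμ * ((2*s-1).factorial:ℝ)) * D^s * 2^s * μ * 36^s := by
          rw [hFdef]; ring
      _ ≤ ((k:ℝ)^s) * ((μ:ℝ)^(2*s-1)) * (2*(s:ℝ)^3)^s * 2^s * μ * 36^s := by
          gcongr <;> positivity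
      _ = (μ:ℝ)^(2*s) * (2^s*2^s*36^s*(k:ℝ)^s) * (s:ℝ)^(3*s) := by
          rw [← e1, ← e2]; ring
      _ ≤ (μ:ℝ)^(2*s) * (2^s*2^s*36^s*(k:ℝ)^s) * ((s:ℝ) * E^(3*s) * F) := by
          gcongr
      _ ≤ (μ:ℝ)^(2*s) * (2^s*2^s*36^s*(k:ℝ)^s) * ((2:ℝ)^s * E^(3*s) * F) := by
          gcongr
      _ = (μ:ℝ)^(2*s) * (288 * E^3 * (k:ℝ))^s * F := by
          rw [e3, show E^(3*s) = (E^3)^s from by rw [← pow_mul]]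
          ring
      _ ≤ (μ:ℝ)^(2*s) * (μ:ℝ)^s * F := by
          gcongr
      _ = ((μ:ℝ)^3)^s * F := by
          rw [← pow_add, ← pow_mul]
          congr 2
          omega
      _ ≤ (36 * M)^s * F := by
          gcongr
      _ = M^s * (36^s * F) := by rw [mul_pow]; ring
  have key : Ck * Cμ * D^s * (2^s * (μ:ℝ)) ≤ M^s :=
    le_of_mul_le_mul_right key2 (by positivity)
  have hrw : (1/2:ℝ)^s * M^s / (μ:ℝ) = M^s / (2^s * (μ:ℝ)) := by
    rw [div_pow]
    field_simp
    simp
  rw [hrw, le_div_iff₀ (by positivity)]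
  calc Ck * Cμ * D^s * (2^s * (μ:ℝ)) ≤ M^s := key

lemma geom_tail : ∀ k : ℕ, ∑ s ∈ Icc 2 k, (1/2:ℝ)^s ≤ 1/2 := by
  have main : ∀ k : ℕ, 1 ≤ k → ∑ s ∈ Icc 2 k, (1/2:ℝ)^s ≤ 1/2 - (1/2)^k := by
    intro k hk
    induction k, hk using Nat.le_induction with
    | base => norm_num
    | succ m hm ih =>
      have hins : Icc 2 (m+1) = insert (m+1) (Icc 2 m) := by
        ext x; simp only [Finset.mem_Icc, Finset.mem_insert]; omega
      have hnot : m + 1 ∉ Icc 2 m := by simp [Finset.mem_Icc]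
      rw [hins, Finset.sum_insert hnot]
      have : (1/2:ℝ)^(m+1) = (1/2)^m / 2 := by rw [pow_succ]; ring
      rw [this]
      linarith [ih]
  intro k
  rcases Nat.eq_zero_or_pos k with h | h
  · subst h; simp
  · have := main k h
    have : (0:ℝ) < (1/2)^k := by positivity
    linarith [main k h]

theorem many_leaf_nodes :
    ∃ c : ℝ, 1 ≤ c ∧ ∃ C : ℝ, 0 < C ∧
      ∀ n μ k : ℕ, 1 ≤ k → (3 : ℝ) ≤ (μ : ℝ) → c * (k : ℝ) ≤ (μ : ℝ) → μ ≤ n →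
        ∀ S : Finset (Fin n), S.card ≤ k →
          (1 : ℝ) - C / (k : ℝ) ≤
            (Nat.card {ω : GraphSample n μ //
                ∀ S' ⊆ S, S'.Nonempty →
                  ((rightNbrs ω S').card : ℝ) / 2 ≤ ((leaves ω S').card : ℝ)} : ℝ)
              / (Nat.card (GraphSample n μ) : ℝ) := by
  refine ⟨6000, by norm_num, 1, by norm_num, ?_⟩
  intro n μ k hk hμ3r hμkr hμn S hS
  -- numeric hypotheses in ℕ
  have hμ3 : 3 ≤ μ := by exact_mod_cast hμ3r
  have hμk : 6000 * k ≤ μ := by exact_mod_cast hμkr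
  have hkμ : k ≤ μ := le_trans (by omega) hμk
  set p : GraphSample n μ → Prop := fun ω =>
    ∀ S' ⊆ S, S'.Nonempty →
      ((rightNbrs ω S').card : ℝ) / 2 ≤ ((leaves ω S').card : ℝ) with hp
  set M : ℕ := μ.choose 3 with hMdef
  have hM1 : 1 ≤ M := Nat.choose_pos hμ3
  set Good : ℕ := (univ.filter p).card with hGood
  set Bad : ℕ := (univ.filter fun ω => ¬ p ω).card with hBad
  have hGB : Good + Bad = M ^ n := by
    rw [hGood, hBad, Finset.card_filter_add_card_filter_not, Finset.card_univ,
      Fintype.card_fun, Fintype.card_fin]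
    congr 1
    exact card_triples μ
  have hNatGood : Nat.card {ω : GraphSample n μ // p ω} = Good := by
    rw [Nat.card_eq_fintype_card, Fintype.card_subtype]
  have hNatTot : Nat.card (GraphSample n μ) = M ^ n := total_card n μ
  -- bound on Bad
  set P : Finset (Finset (Fin n)) := S.powerset.filter (fun S' => 2 ≤ S'.card) with hP
  have hsubset : (univ.filter fun ω : GraphSample n μ => ¬ p ω)
      ⊆ P.biUnion (fun S' => univ.filter
          fun ω : GraphSample n μ => (rightNbrs ω S').card < 2 * S'.card) := by
    intro ω hω
    have hnp := (Finset.mem_filter.1 hω).2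
    simp only [hp] at hnp
    push_neg at hnp
    obtain ⟨S', hsub, hne, hlt⟩ := hnp
    have hcard : (rightNbrs ω S').card < 2 * S'.card := by
      by_contra hge
      push_neg at hge
      exact absurd (leaves_half ω S' hge) (not_le.2 hlt)
    have h2 : 2 ≤ S'.card := by
      by_contra h1
      push_neg at h1
      have hone : S'.card = 1 := by
        have := Finset.card_pos.2 hne; omega
      obtain ⟨j, hj⟩ := Finset.card_eq_one.1 hone
      have : rightNbrs ω S' = (ω j : Finset (Fin μ)) := by
        rw [hj, rightNbrs, Finset.singleton_biUnion]
      rw [this, (ω j).2, hone] at hcard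
      omega
    refine Finset.mem_biUnion.2 ⟨S', ?_, ?_⟩
    · rw [hP, Finset.mem_filter, Finset.mem_powerset]; exact ⟨hsub, h2⟩
    · exact Finset.mem_filter.2 ⟨Finset.mem_univ _, hcard⟩
  have hBadle1 : Bad ≤ ∑ S' ∈ P,
      μ.choose (2 * S'.card - 1) * ((2 * S'.card - 1).choose 3) ^ S'.card
        * M ^ (n - S'.card) := by
    calc Bad ≤ (P.biUnion (fun S' => univ.filter
          fun ω : GraphSample n μ => (rightNbrs ω S').card < 2 * S'.card)).card :=
          Finset.card_le_card hsubset
      _ ≤ ∑ S' ∈ P, (univ.filter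
          fun ω : GraphSample n μ => (rightNbrs ω S').card < 2 * S'.card).card :=
          Finset.card_biUnion_le
      _ ≤ ∑ S' ∈ P, μ.choose (2 * S'.card - 1) * ((2 * S'.card - 1).choose 3) ^ S'.card
            * M ^ (n - S'.card) := by
          refine Finset.sum_le_sum fun S' hS' => ?_
          rw [hP, Finset.mem_filter, Finset.mem_powerset] at hS'
          have hcards : S'.card ≤ k := le_trans (Finset.card_le_card hS'.1) hS
          exact card_bad_le S' (by omega) (by omega)
  -- group by cardinality
  set g : ℕ → ℕ := fun s => μ.choose (2 * s - 1) * ((2 * s - 1).choose 3) ^ s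
      * M ^ (n - s) with hg
  have hfiber : ∑ S' ∈ P, g S'.card = ∑ s ∈ Icc 2 k, ∑ S' ∈ P.filter (fun S' => S'.card = s),
      g S'.card := by
    refine (Finset.sum_fiberwise_of_maps_to ?_ _).symm
    intro S' hS'
    rw [hP, Finset.mem_filter, Finset.mem_powerset] at hS'
    rw [Finset.mem_Icc]
    exact ⟨hS'.2, le_trans (Finset.card_le_card hS'.1) hS⟩
  have hBadle2 : Bad ≤ ∑ s ∈ Icc 2 k, k.choose s * g s := by
    refine le_trans hBadle1 ?_
    rw [show (∑ S' ∈ P, μ.choose (2 * S'.card - 1) * ((2 * S'.card - 1).choose 3) ^ S'.card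
        * M ^ (n - S'.card)) = ∑ S' ∈ P, g S'.card from rfl, hfiber]
    refine Finset.sum_le_sum fun s hs => ?_
    have : ∑ S' ∈ P.filter (fun S' => S'.card = s), g S'.card
        = (P.filter (fun S' => S'.card = s)).card * g s := by
      rw [Finset.sum_congr rfl (fun S' hS' => by
        rw [(Finset.mem_filter.1 hS').2]), Finset.sum_const, smul_eq_mul]
    rw [this]
    have hsubP : P.filter (fun S' => S'.card = s) ⊆ S.powersetCard s := by
      intro S' hS'
      rw [Finset.mem_filter, hP, Finset.mem_filter, Finset.mem_powerset] at hS'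
      rw [Finset.mem_powersetCard]
      exact ⟨hS'.1.1, hS'.2⟩
    have : (P.filter (fun S' => S'.card = s)).card ≤ k.choose s := by
      calc (P.filter (fun S' => S'.card = s)).card ≤ (S.powersetCard s).card :=
            Finset.card_le_card hsubP
        _ = S.card.choose s := Finset.card_powersetCard s S
        _ ≤ k.choose s := Nat.choose_le_choose s hS
    exact Nat.mul_le_mul_right _ this
  -- real estimates
  have hMpos : (0:ℝ) < (M:ℝ) := by exact_mod_cast hM1
  have hTpos : (0:ℝ) < ((M:ℝ))^n := by positivity
  have hμpos : (0:ℝ) < (μ:ℝ) := by positivity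
  have hterm : ∀ s ∈ Icc 2 k, ((k.choose s * g s : ℕ) : ℝ) / (M:ℝ)^n ≤ (1/2)^s / μ := by
    intro s hs
    rw [Finset.mem_Icc] at hs
    have hsn : s ≤ n := le_trans (le_trans hs.2 hkμ) hμn
    have htb := term_bound k μ s hs.1 hs.2 hμ3 hμk
    have hpow : (M:ℝ)^n = (M:ℝ)^s * (M:ℝ)^(n-s) := by
      rw [← pow_add]; congr 1; omega
    have hδ : (0:ℝ) ≤ (M:ℝ)^(n-s) := by positivity
    have h1 : ((k.choose s :ℝ)) * ((μ.choose (2*s-1):ℝ)) * (((2*s-1).choose 3 :ℝ))^s * μ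
        ≤ (1/2)^s * (M:ℝ)^s := by
      have h2 := mul_le_mul_of_nonneg_right htb hμpos.le
      have h3 : (1/2:ℝ)^s * ((μ.choose 3 : ℝ))^s / (μ:ℝ) * μ = (1/2)^s * (M:ℝ)^s := by
        rw [hMdef]; field_simp
      linarith [h2, h3.symm.le]
    simp only [hg]
    push_cast
    rw [div_le_div_iff₀ hTpos hμpos, hpow]
    nlinarith [mul_le_mul_of_nonneg_right h1 hδ]
  have hBadReal : (Bad:ℝ)/(M:ℝ)^n ≤ 1/(2*(μ:ℝ)) := by
    have hc : (Bad:ℝ) ≤ ∑ s ∈ Icc 2 k, ((k.choose s * g s : ℕ) : ℝ) := by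
      rw [← Nat.cast_sum]
      exact_mod_cast hBadle2
    calc (Bad:ℝ)/(M:ℝ)^n ≤ (∑ s ∈ Icc 2 k, ((k.choose s * g s : ℕ) : ℝ))/(M:ℝ)^n := by
          exact (div_le_div_iff_of_pos_right hTpos).mpr hc
      _ = ∑ s ∈ Icc 2 k, ((k.choose s * g s : ℕ) : ℝ)/(M:ℝ)^n := Finset.sum_div _ _ _
      _ ≤ ∑ s ∈ Icc 2 k, (1/2:ℝ)^s/(μ:ℝ) := Finset.sum_le_sum hterm
      _ = (∑ s ∈ Icc 2 k, (1/2:ℝ)^s)/(μ:ℝ) := (Finset.sum_div _ _ _).symm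
      _ ≤ (1/2)/(μ:ℝ) := by
          exact (div_le_div_iff_of_pos_right hμpos).mpr (geom_tail k)
      _ = 1/(2*(μ:ℝ)) := by ring
  -- conclude
  rw [hNatTot, hNatGood]
  have hGoodR : (Good:ℝ) = (M:ℝ)^n - (Bad:ℝ) := by
    have := congrArg (fun x : ℕ => (x:ℝ)) hGB
    push_cast at this
    linarith
  have hcast : (((M:ℕ)^n : ℕ) : ℝ) = (M:ℝ)^n := by push_cast; ring
  rw [hcast, hGoodR]
  have hfrac : ((M:ℝ)^n - (Bad:ℝ))/(M:ℝ)^n = 1 - (Bad:ℝ)/(M:ℝ)^n := by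
    field_simp
  rw [hfrac]
  have hkpos : (0:ℝ) < k := by exact_mod_cast hk
  have hlast : 1/(2*(μ:ℝ)) ≤ 1/(k:ℝ) := by
    apply div_le_div_of_nonneg_left (by norm_num) hkpos
    have : (k:ℝ) ≤ μ := by exact_mod_cast hkμ
    linarith
  have : (1:ℝ)/k = 1/(k:ℝ) := rfl
  linarith [hBadReal, hlast]
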